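/- Let $A, B : \mathbb{R} \to \mathbb{C}$ be continuous with $A(\xi) = A(0) + O(|\xi|)$ and $B(\xi) = B(0) + O(|\xi|)$ as $\xi \to 0$, and suppose $A(0) = B(0) = c$ with $c \neq 0$. Then there exist constants $\delta > 0$ and $K > 0$ such that for all $T \geq K$, $\int_{K/T}^{\delta} \frac{|e^{-2\pi i T\xi} A(\xi) - e^{2\pi i T \xi} B(-\xi)|^2}{\xi}\, d\xi \geq \frac{1}{2}|c|^2 \log T - K$. -/

import Mathlib

open Real intervalIntegral MeasureTheory

private lemma ibp_cos' (a l : ℝ) (ha : 0 < a) (ha1 : a ≤ 1) (hl : 0 < l) :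
    |∫ ξ in a..1, Real.cos (l*ξ)/ξ| ≤ 1/l + 1/(l*a) + (1/a - 1)/l := by
  have hpos : ∀ x ∈ Set.uIcc a (1:ℝ), 0 < x := by
    intro x hx; rw [Set.uIcc_of_le ha1] at hx; exact lt_of_lt_of_le ha hx.1
  have hu : ∀ x ∈ Set.uIcc a (1:ℝ), HasDerivAt (fun y : ℝ => y⁻¹) (-((x:ℝ)^2)⁻¹) x :=
    fun x hx => hasDerivAt_inv (ne_of_gt (hpos x hx))
  have hv : ∀ x ∈ Set.uIcc a (1:ℝ), HasDerivAt (fun y : ℝ => Real.sin (l*y) / l) (Real.cos (l*x)) x := by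
    intro x hx
    have h1 : HasDerivAt (fun y : ℝ => l*y) l x := by
      simpa using (hasDerivAt_id x).const_mul l
    have h2 := (Real.hasDerivAt_sin (l*x)).comp x h1
    have h3 := h2.div_const l
    simpa [mul_div_assoc, mul_div_cancel_right₀ _ (ne_of_gt hl)] using h3
  have hcontu' : ContinuousOn (fun x : ℝ => -((x:ℝ)^2)⁻¹) (Set.uIcc a 1) := by
    apply ContinuousOn.neg
    apply ContinuousOn.inv₀ (by fun_prop)
    intro x hx; exact pow_ne_zero _ (ne_of_gt (hpos x hx))
  have hiu' : IntervalIntegrable (fun x : ℝ => -((x:ℝ)^2)⁻¹) volume a 1 :=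
    hcontu'.intervalIntegrable
  have hiv' : IntervalIntegrable (fun x : ℝ => Real.cos (l*x)) volume a 1 :=
    (Real.continuous_cos.comp (by fun_prop)).intervalIntegrable _ _
  have key := intervalIntegral.integral_mul_deriv_eq_deriv_mul hu hv hiu' hiv'
  have hgoal : (∫ ξ in a..1, Real.cos (l*ξ)/ξ) = ∫ x in a..1, x⁻¹ * Real.cos (l*x) := by
    simp only [div_eq_mul_inv, mul_comm]
  rw [hgoal, key]
  have hsin : ∀ x : ℝ, |Real.sin x| ≤ 1 := fun x => abs_sin_le_one x
  have h1 : |(1:ℝ)⁻¹ * (Real.sin (l*1)/l)| ≤ 1/l := by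
    rw [abs_mul, abs_div, abs_of_pos hl]
    simp only [inv_one, abs_one, one_mul]
    gcongr
    exact hsin _
  have h2 : |a⁻¹ * (Real.sin (l*a)/l)| ≤ 1/(l*a) := by
    rw [abs_mul, abs_div, abs_of_pos hl, abs_inv, abs_of_pos ha]
    rw [one_div, mul_inv]
    rw [div_eq_mul_inv]
    calc a⁻¹ * (|Real.sin (l*a)| * l⁻¹) ≤ a⁻¹ * (1 * l⁻¹) := by
          gcongr a⁻¹ * (?_ * l⁻¹)
          exact hsin _
      _ = l⁻¹ * a⁻¹ := by ring
  have hint2 : (∫ x in a..1, ((x:ℝ)^2)⁻¹) = 1/a - 1 := by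
    have hF : ∀ x ∈ Set.uIcc a (1:ℝ), HasDerivAt (fun y : ℝ => -y⁻¹) (((x:ℝ)^2)⁻¹) x := by
      intro x hx
      simpa using (hasDerivAt_inv (ne_of_gt (hpos x hx))).fun_neg
    have hcont : ContinuousOn (fun x : ℝ => ((x:ℝ)^2)⁻¹) (Set.uIcc a 1) := by
      apply ContinuousOn.inv₀ (by fun_prop)
      intro x hx
      exact pow_ne_zero _ (ne_of_gt (hpos x hx))
    rw [intervalIntegral.integral_eq_sub_of_hasDerivAt hF hcont.intervalIntegrable]
    field_simp
    ring
  have h3 : |∫ x in a..1, (-((x:ℝ)^2)⁻¹) * (Real.sin (l*x)/l)| ≤ (1/a - 1)/l := by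
    have hb : ∀ x ∈ Set.Icc a (1:ℝ), |(-((x:ℝ)^2)⁻¹) * (Real.sin (l*x)/l)| ≤ ((x:ℝ)^2)⁻¹ / l := by
      intro x hx
      rw [abs_mul, abs_neg, abs_inv, abs_div, abs_of_pos hl, abs_pow]
      have hx0 : (0:ℝ) < x := lt_of_lt_of_le ha hx.1
      rw [abs_of_pos hx0]
      rw [div_eq_mul_inv, div_eq_mul_inv]
      calc (x^2)⁻¹ * (|Real.sin (l*x)| * l⁻¹) ≤ (x^2)⁻¹ * (1 * l⁻¹) := by
            gcongr (x^2)⁻¹ * (?_ * l⁻¹)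
            exact hsin _
        _ = (x^2)⁻¹ * l⁻¹ := by ring
    have hi1 : IntervalIntegrable (fun x : ℝ => |(-((x:ℝ)^2)⁻¹) * (Real.sin (l*x)/l)|) volume a 1 := by
      apply ContinuousOn.intervalIntegrable
      apply ContinuousOn.abs
      apply ContinuousOn.mul
      · apply ContinuousOn.neg
        apply ContinuousOn.inv₀ (by fun_prop)
        intro x hx
        exact pow_ne_zero _ (ne_of_gt (hpos x hx))
      · fun_prop
    have hi2 : IntervalIntegrable (fun x : ℝ => ((x:ℝ)^2)⁻¹ / l) volume a 1 := by
      apply ContinuousOn.intervalIntegrable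
      apply ContinuousOn.div_const
      apply ContinuousOn.inv₀ (by fun_prop)
      intro x hx
      exact pow_ne_zero _ (ne_of_gt (hpos x hx))
    calc |∫ x in a..1, (-((x:ℝ)^2)⁻¹) * (Real.sin (l*x)/l)|
        ≤ ∫ x in a..1, |(-((x:ℝ)^2)⁻¹) * (Real.sin (l*x)/l)| := by
          apply intervalIntegral.abs_integral_le_integral_abs ha1
      _ ≤ ∫ x in a..1, ((x:ℝ)^2)⁻¹ / l := intervalIntegral.integral_mono_on ha1 hi1 hi2 hb
      _ = (∫ x in a..1, ((x:ℝ)^2)⁻¹) / l := by rw [intervalIntegral.integral_div]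
      _ = (1/a - 1)/l := by rw [hint2]
  calc |(1:ℝ)⁻¹ * (Real.sin (l*1)/l) - a⁻¹ * (Real.sin (l*a)/l) - ∫ x in a..1, (-((x:ℝ)^2)⁻¹) * (Real.sin (l*x)/l)|
      ≤ |(1:ℝ)⁻¹ * (Real.sin (l*1)/l)| + |a⁻¹ * (Real.sin (l*a)/l)| + |∫ x in a..1, (-((x:ℝ)^2)⁻¹) * (Real.sin (l*x)/l)| := by
        apply (abs_sub _ _).trans
        gcongr
        exact abs_sub _ _
    _ ≤ 1/l + 1/(l*a) + (1/a - 1)/l := by gcongr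

private lemma sin_sq_int' (a l : ℝ) (ha : 0 < a) (ha1 : a ≤ 1) :
    (∫ ξ in a..1, Real.sin (l*ξ)^2/ξ)
      = -(Real.log a)/2 - (∫ ξ in a..1, Real.cos ((2*l)*ξ)/ξ)/2 := by
  have hne : ∀ x ∈ Set.uIcc a (1:ℝ), x ≠ 0 := by
    intro x hx
    rw [Set.uIcc_of_le ha1] at hx
    exact ne_of_gt (lt_of_lt_of_le ha hx.1)
  have hpt : Set.EqOn (fun ξ : ℝ => Real.sin (l*ξ)^2/ξ)
      (fun ξ : ℝ => (1/ξ)/2 - (Real.cos ((2*l)*ξ)/ξ)/2) (Set.uIcc a 1) := by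
    intro ξ _
    simp only
    rw [show (2*l)*ξ = 2*(l*ξ) by ring, Real.sin_sq_eq_half_sub]
    ring
  have hi1 : IntervalIntegrable (fun ξ : ℝ => (1/ξ)/2) volume a 1 := by
    apply ContinuousOn.intervalIntegrable
    apply ContinuousOn.div_const
    exact ContinuousOn.div continuousOn_const (by fun_prop) hne
  have hi2 : IntervalIntegrable (fun ξ : ℝ => (Real.cos ((2*l)*ξ)/ξ)/2) volume a 1 := by
    apply ContinuousOn.intervalIntegrable
    apply ContinuousOn.div_const
    exact ContinuousOn.div (by fun_prop) (by fun_prop) hne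
  rw [intervalIntegral.integral_congr hpt, intervalIntegral.integral_sub hi1 hi2,
    intervalIntegral.integral_div, intervalIntegral.integral_div,
    integral_one_div (by rw [Set.uIcc_of_le ha1]; intro h; exact absurd h.1 (not_le.mpr ha)),
    one_div, Real.log_inv]

private lemma ptwise' (A B : ℝ → ℂ) (c : ℂ) (hA0 : A 0 = c) (hB0 : B 0 = c)
    (CA : ℝ) (hAlip : ∀ ξ : ℝ, ‖A ξ - A 0‖ ≤ CA * |ξ|)
    (CB : ℝ) (hBlip : ∀ ξ : ℝ, ‖B ξ - B 0‖ ≤ CB * |ξ|)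
    (T ξ : ℝ) (hξ : 0 < ξ) :
    ‖Complex.exp (-(2*π*T*ξ : ℝ) * Complex.I) * A ξ
        - Complex.exp ((2*π*T*ξ : ℝ) * Complex.I) * B (-ξ)‖^2 / ξ
      ≥ 4*‖c‖^2*(Real.sin (2*π*T*ξ)^2/ξ) - 4*‖c‖*(CA+CB) := by
  set θ : ℝ := 2*π*T*ξ with hθ
  set e₁ : ℂ := Complex.exp (-(θ : ℝ) * Complex.I) with he₁
  set e₂ : ℂ := Complex.exp ((θ : ℝ) * Complex.I) with he₂
  have hCA : 0 ≤ CA := by have := (norm_nonneg (A 1 - A 0)).trans (hAlip 1); simpa using this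
  have hCB : 0 ≤ CB := by have := (norm_nonneg (B 1 - B 0)).trans (hBlip 1); simpa using this
  have hdiff : e₁ - e₂ = ((-(2*Real.sin θ) : ℝ) : ℂ) * Complex.I := by
    rw [he₁, he₂]
    rw [show (-(θ:ℝ) : ℂ) * Complex.I = ((-θ : ℝ) : ℂ) * Complex.I by push_cast; ring]
    rw [Complex.exp_mul_I, Complex.exp_mul_I]
    push_cast
    rw [Complex.cos_neg, Complex.sin_neg]
    ring
  have hsplit : e₁ * A ξ - e₂ * B (-ξ)
      = (e₁ - e₂) * c + (e₁ * (A ξ - c) - e₂ * (B (-ξ) - c)) := by ring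
  have hn1 : ‖(e₁ - e₂) * c‖ = 2 * |Real.sin θ| * ‖c‖ := by
    rw [hdiff, norm_mul, norm_mul, Complex.norm_I, Complex.norm_real]
    rw [Real.norm_eq_abs, abs_neg, abs_mul]
    simp [abs_of_nonneg]
  have habs1 : ‖e₁‖ = 1 := by
    rw [he₁, show (-(θ:ℝ) : ℂ) * Complex.I = ((-θ : ℝ) : ℂ) * Complex.I by push_cast; ring]
    exact Complex.norm_exp_ofReal_mul_I _
  have habs2 : ‖e₂‖ = 1 := Complex.norm_exp_ofReal_mul_I _
  have hw : ‖e₁ * (A ξ - c) - e₂ * (B (-ξ) - c)‖ ≤ (CA + CB) * ξ := by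
    calc ‖e₁ * (A ξ - c) - e₂ * (B (-ξ) - c)‖
        ≤ ‖e₁ * (A ξ - c)‖ + ‖e₂ * (B (-ξ) - c)‖ := norm_sub_le _ _
      _ = ‖A ξ - c‖ + ‖B (-ξ) - c‖ := by rw [norm_mul, norm_mul, habs1, habs2, one_mul, one_mul]
      _ ≤ CA * |ξ| + CB * |(-ξ)| := by
          have h1 := hAlip ξ; rw [hA0] at h1
          have h2 := hBlip (-ξ); rw [hB0] at h2
          exact add_le_add h1 h2
      _ = (CA + CB) * ξ := by rw [abs_neg, abs_of_pos hξ]; ring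
  have hlow : ‖e₁ * A ξ - e₂ * B (-ξ)‖ ≥ 2 * |Real.sin θ| * ‖c‖ - (CA + CB) * ξ := by
    rw [hsplit]
    calc ‖(e₁ - e₂) * c + (e₁ * (A ξ - c) - e₂ * (B (-ξ) - c))‖
        ≥ ‖(e₁ - e₂) * c‖ - ‖e₁ * (A ξ - c) - e₂ * (B (-ξ) - c)‖ := by
          have h := norm_sub_le ((e₁ - e₂) * c + (e₁ * (A ξ - c) - e₂ * (B (-ξ) - c)))
            (e₁ * (A ξ - c) - e₂ * (B (-ξ) - c))
          rw [add_sub_cancel_right] at h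
          linarith
      _ ≥ 2 * |Real.sin θ| * ‖c‖ - (CA + CB) * ξ := by rw [hn1]; linarith
  set n : ℝ := ‖e₁ * A ξ - e₂ * B (-ξ)‖ with hn
  have hn0 : 0 ≤ n := norm_nonneg _
  have hs1 : |Real.sin θ| ≤ 1 := abs_sin_le_one θ
  have hs0 : 0 ≤ |Real.sin θ| := abs_nonneg _
  have hm0 : 0 ≤ ‖c‖ := norm_nonneg _
  have hsq : n^2 ≥ 4*‖c‖^2*Real.sin θ^2 - 4*‖c‖*(CA+CB)*ξ := by
    have hss : Real.sin θ^2 = |Real.sin θ|^2 := (sq_abs _).symm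
    rw [hss]
    have hD0 : 0 ≤ (CA+CB)*ξ := mul_nonneg (add_nonneg hCA hCB) hξ.le
    rcases le_or_gt ((CA+CB)*ξ) (2 * |Real.sin θ| * ‖c‖) with h | h
    · have h2 : (2 * |Real.sin θ| * ‖c‖ - (CA+CB)*ξ)^2 ≤ n^2 := by
        apply pow_le_pow_left₀ (by linarith) (by linarith)
      nlinarith [mul_nonneg (mul_nonneg hm0 hD0) (sub_nonneg.mpr hs1), sq_nonneg ((CA+CB)*ξ)]
    · nlinarith [sq_nonneg n, mul_nonneg hm0 hD0, mul_nonneg (mul_nonneg hs0 hm0) hD0,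
        mul_nonneg hm0 (mul_nonneg hs0 hm0)]
  have hdiv : (4*‖c‖^2*Real.sin θ^2 - 4*‖c‖*(CA+CB)*ξ)/ξ ≤ n^2/ξ := by gcongr
  have heq : (4*‖c‖^2*Real.sin θ^2 - 4*‖c‖*(CA+CB)*ξ)/ξ
      = 4*‖c‖^2*(Real.sin θ^2/ξ) - 4*‖c‖*(CA+CB) := by field_simp
  rw [heq] at hdiv
  exact hdiv

set_option maxHeartbeats 1000000 in
/-- The key Fourier-side logarithmic lower bound. -/
theorem stmt_14 (A B : ℝ → ℂ) (hA : Continuous A) (hB : Continuous B)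
    (c : ℂ) (hc : c ≠ 0) (hA0 : A 0 = c) (hB0 : B 0 = c)
    (CA : ℝ) (hAlip : ∀ ξ : ℝ, ‖A ξ - A 0‖ ≤ CA * |ξ|)
    (CB : ℝ) (hBlip : ∀ ξ : ℝ, ‖B ξ - B 0‖ ≤ CB * |ξ|) :
    ∃ δ > (0:ℝ), ∃ K > (0:ℝ), ∀ T : ℝ, T ≥ K →
      (∫ ξ in (K/T)..δ,
        ‖Complex.exp (-(2*π*T*ξ : ℝ) * Complex.I) * A ξ
          - Complex.exp ((2*π*T*ξ : ℝ) * Complex.I) * B (-ξ)‖^2 / ξ)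
      ≥ (1/2) * ‖c‖^2 * Real.log T - K := by
  have hm : 0 < ‖c‖ := norm_pos_iff.mpr hc
  have hCA : 0 ≤ CA := by have := (norm_nonneg (A 1 - A 0)).trans (hAlip 1); simpa using this
  have hCB : 0 ≤ CB := by have := (norm_nonneg (B 1 - B 0)).trans (hBlip 1); simpa using this
  obtain ⟨E, hE⟩ : ∃ E : ℝ, E = 4*‖c‖*(CA+CB) := ⟨_, rfl⟩
  have hE0 : 0 ≤ E := by rw [hE]; positivity
  obtain ⟨K, hKdef⟩ : ∃ K : ℝ, K = 1 + 4*(‖c‖^2)^2 + 4*‖c‖^2 + 2*E := ⟨_, rfl⟩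
  have hK1 : 1 ≤ K := by rw [hKdef]; nlinarith [sq_nonneg (‖c‖^2), sq_nonneg ‖c‖]
  have hK0 : (0:ℝ) < K := by linarith
  refine ⟨1, one_pos, K, hK0, ?_⟩
  intro T hT
  have hT1 : (1:ℝ) ≤ T := le_trans hK1 hT
  have hT0 : (0:ℝ) < T := by linarith
  obtain ⟨a, hadef⟩ : ∃ a : ℝ, a = K/T := ⟨_, rfl⟩
  rw [← hadef]
  have ha : 0 < a := hadef ▸ div_pos hK0 hT0
  have ha1 : a ≤ 1 := hadef ▸ div_le_one_of_le₀ hT hT0.le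
  have hne : ∀ x ∈ Set.uIcc a (1:ℝ), x ≠ 0 := by
    intro x hx
    rw [Set.uIcc_of_le ha1] at hx
    exact ne_of_gt (lt_of_lt_of_le ha hx.1)
  -- integrability of both sides
  have hif : IntervalIntegrable (fun ξ : ℝ =>
      ‖Complex.exp (-(2*π*T*ξ : ℝ) * Complex.I) * A ξ
        - Complex.exp ((2*π*T*ξ : ℝ) * Complex.I) * B (-ξ)‖^2 / ξ) volume a 1 := by
    apply ContinuousOn.intervalIntegrable
    apply ContinuousOn.div ?_ (by fun_prop) hne
    apply Continuous.continuousOn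
    apply Continuous.pow
    apply Continuous.norm
    apply Continuous.sub
    · exact (Complex.continuous_exp.comp (by fun_prop)).mul hA
    · exact (Complex.continuous_exp.comp (by fun_prop)).mul (hB.comp continuous_neg)
  have hig : IntervalIntegrable (fun ξ : ℝ =>
      4*‖c‖^2*(Real.sin (2*π*T*ξ)^2/ξ) - E) volume a 1 := by
    apply ContinuousOn.intervalIntegrable
    apply ContinuousOn.sub ?_ continuousOn_const
    exact ContinuousOn.mul continuousOn_const (ContinuousOn.div (by fun_prop) (by fun_prop) hne)
  have hig2 : IntervalIntegrable (fun ξ : ℝ =>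
      4*‖c‖^2*(Real.sin (2*π*T*ξ)^2/ξ)) volume a 1 := by
    apply ContinuousOn.intervalIntegrable
    exact ContinuousOn.mul continuousOn_const (ContinuousOn.div (by fun_prop) (by fun_prop) hne)
  have hmono := intervalIntegral.integral_mono_on ha1 hig hif (by
    intro x hx
    rw [hE]
    exact ptwise' A B c hA0 hB0 CA hAlip CB hBlip T x (lt_of_lt_of_le ha hx.1))
  -- compute the lower integral
  have hg_eq : (∫ ξ in a..1, (4*‖c‖^2*(Real.sin (2*π*T*ξ)^2/ξ) - E))
      = 4*‖c‖^2 * (∫ ξ in a..1, Real.sin (2*π*T*ξ)^2/ξ) - E*(1-a) := by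
    rw [intervalIntegral.integral_sub hig2 intervalIntegrable_const,
      intervalIntegral.integral_const_mul, intervalIntegral.integral_const]
    rw [smul_eq_mul]
    ring
  have hS := sin_sq_int' a (2*π*T) ha ha1
  have hR := ibp_cos' a (2*(2*π*T)) ha ha1 (by positivity)
  set R : ℝ := ∫ ξ in a..1, Real.cos ((2*(2*π*T))*ξ)/ξ with hRdef
  -- numeric bound |R| ≤ 1
  have hπ : (3:ℝ) < π := Real.pi_gt_three
  have hRb : |R| ≤ 1 := by
    refine hR.trans ?_
    have hb1 : 1/(2*(2*π*T)) ≤ 1/3 := by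
      apply one_div_le_one_div_of_le (by norm_num)
      nlinarith
    have hla : 2*(2*π*T)*a = 4*π*K := by
      rw [hadef]; field_simp; ring
    have hb2 : 1/(2*(2*π*T)*a) ≤ 1/3 := by
      rw [hla]
      apply one_div_le_one_div_of_le (by norm_num)
      nlinarith
    have hb3 : (1/a - 1)/(2*(2*π*T)) ≤ 1/3 := by
      have h1a : 1/a = T/K := by rw [hadef, one_div_div]
      have : (1/a - 1)/(2*(2*π*T)) ≤ (1/a)/(2*(2*π*T)) := by
        gcongr
        linarith
      refine this.trans ?_
      rw [h1a]
      rw [show T/K/(2*(2*π*T)) = 1/(4*π*K) by field_simp; ring]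
      apply one_div_le_one_div_of_le (by norm_num)
      nlinarith
    linarith
  have hRub : R ≤ 1 := le_trans (le_abs_self R) hRb
  have hloga : Real.log a = Real.log K - Real.log T := by
    rw [hadef, Real.log_div (ne_of_gt hK0) (ne_of_gt hT0)]
  -- assemble
  rw [hg_eq, hS, hloga] at hmono
  have hlogK0 : 0 ≤ Real.log K := Real.log_nonneg hK1
  have hlogTK : Real.log K ≤ Real.log T := Real.log_le_log hK0 hT
  -- key: K absorbs everything
  have hKbig : (1/2)*‖c‖^2*Real.log K + 2*‖c‖^2 + E ≤ K := by
    have hsq : Real.sqrt K * Real.sqrt K = K := Real.mul_self_sqrt hK0.le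
    have hs0 : 0 ≤ Real.sqrt K := Real.sqrt_nonneg K
    have hlogs : Real.log K ≤ 2 * Real.sqrt K := by
      have h1 : Real.log (Real.sqrt K) ≤ Real.sqrt K - 1 :=
        Real.log_le_sub_one_of_pos (Real.sqrt_pos.mpr hK0)
      have h2 : Real.log (Real.sqrt K) = Real.log K / 2 := Real.log_sqrt hK0.le
      linarith
    have hx1 : (1/2)*‖c‖^2*Real.log K ≤ ‖c‖^2*Real.sqrt K := by
      have := mul_le_mul_of_nonneg_left hlogs (sq_nonneg ‖c‖)
      linarith
    have hx2 : ‖c‖^2*Real.sqrt K ≤ K/2 := by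
      nlinarith [sq_nonneg (Real.sqrt K - 2*‖c‖^2), sq_nonneg (‖c‖^2), sq_nonneg ‖c‖]
    nlinarith [sq_nonneg (‖c‖^2), sq_nonneg ‖c‖]
  have hp2 : (3/2)*‖c‖^2*Real.log K ≤ (3/2)*‖c‖^2*Real.log T := by
    apply mul_le_mul_of_nonneg_left hlogTK (by positivity)
  have hp1 : 2*‖c‖^2*R ≤ 2*‖c‖^2 := by nlinarith [sq_nonneg ‖c‖]
  have hp3 : E*(1-a) ≤ E := by nlinarith
  refine le_trans ?_ hmono
  nlinarith [hp1, hp2, hp3, hKbig]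

-- #print axioms check
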